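/- The function u(x,t) = −t⁴/3 − 2tx − 12/(x − t³/3)² satisfies the Boussinesq equation u_tt + u_xxxx + u·u_xx + u_x² = 0 at every point (x,t) with x ≠ t³/3. -/

import Mathlib

open Real

noncomputable def px (u : ℝ → ℝ → ℝ) (x t : ℝ) : ℝ := deriv (fun y => u y t) x
noncomputable def pt (u : ℝ → ℝ → ℝ) (x t : ℝ) : ℝ := deriv (fun s => u x s) t

section aux

noncomputable def U : ℝ → ℝ → ℝ := fun x t => -t ^ 4 / 3 - 2 * t * x - 12 / (x - t ^ 3 / 3) ^ 2
noncomputable def F1 : ℝ → ℝ → ℝ := fun x t => -2 * t + 24 / (x - t ^ 3 / 3) ^ 3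
noncomputable def F2 : ℝ → ℝ → ℝ := fun x t => -72 / (x - t ^ 3 / 3) ^ 4
noncomputable def F3 : ℝ → ℝ → ℝ := fun x t => 288 / (x - t ^ 3 / 3) ^ 5
noncomputable def F4 : ℝ → ℝ → ℝ := fun x t => -1440 / (x - t ^ 3 / 3) ^ 6
noncomputable def G1 : ℝ → ℝ → ℝ := fun x t => -4 * t ^ 3 / 3 - 2 * x - 24 * t ^ 2 / (x - t ^ 3 / 3) ^ 3
noncomputable def G2 : ℝ → ℝ → ℝ := fun x t => -4 * t ^ 2 - 48 * t / (x - t ^ 3 / 3) ^ 3 - 72 * t ^ 4 / (x - t ^ 3 / 3) ^ 4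

lemma hsub (x t : ℝ) : HasDerivAt (fun y : ℝ => y - t ^ 3 / 3) 1 x := by
  simpa using (hasDerivAt_id x).sub_const (t ^ 3 / 3)

lemma hU_x (x t : ℝ) (h : x ≠ t ^ 3 / 3) : HasDerivAt (fun y => U y t) (F1 x t) x := by
  have hs : x - t ^ 3 / 3 ≠ 0 := sub_ne_zero.mpr h
  have h1 := ((hasDerivAt_const x (12:ℝ)).div ((hsub x t).pow 2) (pow_ne_zero 2 hs))
  have h2 := (((hasDerivAt_const x (-t^4/3)).sub
      (((hasDerivAt_id x).const_mul (2*t)))).sub h1)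
  convert h2 using 1
  · rfl
  · rfl
  · rfl
  unfold F1
  push_cast [Pi.pow_apply]
  set s := x - t ^ 3 / 3 with hsdef
  field_simp [hs]
  ring

lemma hF1_x (x t : ℝ) (h : x ≠ t ^ 3 / 3) : HasDerivAt (fun y => F1 y t) (F2 x t) x := by
  have hs : x - t ^ 3 / 3 ≠ 0 := sub_ne_zero.mpr h
  have h1 := ((hasDerivAt_const x (24:ℝ)).div ((hsub x t).pow 3) (pow_ne_zero 3 hs))
  have h2 := (hasDerivAt_const x (-2*t)).add h1
  convert h2 using 1
  · rfl
  · rfl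
  · rfl
  unfold F2
  push_cast [Pi.pow_apply]
  set s := x - t ^ 3 / 3 with hsdef
  field_simp [hs]
  ring

lemma hF2_x (x t : ℝ) (h : x ≠ t ^ 3 / 3) : HasDerivAt (fun y => F2 y t) (F3 x t) x := by
  have hs : x - t ^ 3 / 3 ≠ 0 := sub_ne_zero.mpr h
  have h1 := ((hasDerivAt_const x (-72:ℝ)).div ((hsub x t).pow 4) (pow_ne_zero 4 hs))
  convert h1 using 1
  · rfl
  · rfl
  · rfl
  unfold F3
  push_cast [Pi.pow_apply]
  set s := x - t ^ 3 / 3 with hsdef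
  field_simp [hs]
  ring

lemma hF3_x (x t : ℝ) (h : x ≠ t ^ 3 / 3) : HasDerivAt (fun y => F3 y t) (F4 x t) x := by
  have hs : x - t ^ 3 / 3 ≠ 0 := sub_ne_zero.mpr h
  have h1 := ((hasDerivAt_const x (288:ℝ)).div ((hsub x t).pow 5) (pow_ne_zero 5 hs))
  convert h1 using 1
  · rfl
  · rfl
  · rfl
  unfold F4
  push_cast [Pi.pow_apply]
  set s := x - t ^ 3 / 3 with hsdef
  field_simp [hs]
  ring

lemma hsub_t (x t : ℝ) : HasDerivAt (fun s : ℝ => x - s ^ 3 / 3) (-(t ^ 2)) t := by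
  have := ((hasDerivAt_pow 3 t).div_const 3).const_sub x
  convert this using 1
  · rfl
  · rfl
  push_cast
  ring

lemma hU_t (x t : ℝ) (h : x ≠ t ^ 3 / 3) : HasDerivAt (fun s => U x s) (G1 x t) t := by
  have hs : x - t ^ 3 / 3 ≠ 0 := sub_ne_zero.mpr h
  have h1 := ((hasDerivAt_const t (12:ℝ)).div ((hsub_t x t).pow 2) (pow_ne_zero 2 hs))
  have h2 : HasDerivAt (fun s : ℝ => -s ^ 4 / 3) (-4 * t ^ 3 / 3) t := by
    have := ((hasDerivAt_pow 4 t).div_const 3).neg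
    convert this using 1
    · rfl
    · rfl
    · funext s; simp only [Pi.neg_apply]; ring
    · push_cast; ring
  have h3 : HasDerivAt (fun s : ℝ => 2 * s * x) (2 * x) t := by
    have := (hasDerivAt_id t).const_mul (2 * x)
    convert this using 1
    · rfl
    · rfl
    · funext s; simp only [id_eq]; ring
    · ring
  have h4 := (h2.sub h3).sub h1
  convert h4 using 1
  · rfl
  · rfl
  · rfl
  unfold G1
  push_cast [Pi.pow_apply]
  set s := x - t ^ 3 / 3 with hsdef
  field_simp [hs]
  ring

lemma hG1_t (x t : ℝ) (h : x ≠ t ^ 3 / 3) : HasDerivAt (fun s => G1 x s) (G2 x t) t := by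
  have hs : x - t ^ 3 / 3 ≠ 0 := sub_ne_zero.mpr h
  have hnum : HasDerivAt (fun s : ℝ => 24 * s ^ 2) (48 * t) t := by
    have := (hasDerivAt_pow 2 t).const_mul 24
    convert this using 1
    · rfl
    · rfl
    push_cast; ring
  have h1 := hnum.div ((hsub_t x t).pow 3) (pow_ne_zero 3 hs)
  have h2 : HasDerivAt (fun s : ℝ => -4 * s ^ 3 / 3 - 2 * x) (-4 * t ^ 2) t := by
    have := (((hasDerivAt_pow 3 t).const_mul (-4)).div_const 3).sub_const (2 * x)
    convert this using 1
    · rfl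
    · rfl
    push_cast; ring
  have h3 := h2.sub h1
  convert h3 using 1
  · rfl
  · rfl
  · rfl
  unfold G2
  push_cast [Pi.pow_apply]
  set s := x - t ^ 3 / 3 with hsdef
  field_simp [hs]
  ring

lemma openx (t : ℝ) : IsOpen {y : ℝ | y ≠ t ^ 3 / 3} :=
  isOpen_compl_singleton

lemma opent (x : ℝ) : IsOpen {s : ℝ | x ≠ s ^ 3 / 3} := by
  have : {s : ℝ | x ≠ s ^ 3 / 3} = (fun s : ℝ => s ^ 3 / 3) ⁻¹' {x}ᶜ := by
    ext s; simp [eq_comm]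
  rw [this]
  exact (isOpen_compl_singleton).preimage (by continuity)

end aux

theorem boussinesq_sol_weakCS :
    ∀ x t : ℝ, x ≠ t ^ 3 / 3 →
      (let u : ℝ → ℝ → ℝ := fun x t => -t ^ 4 / 3 - 2 * t * x - 12 / (x - t ^ 3 / 3) ^ 2
       pt (pt u) x t + px (px (px (px u))) x t + u x t * px (px u) x t
         + (px u x t) ^ 2 = 0) := by
  intro x t h
  intro u
  have hu : u = U := rfl
  have hs : x - t ^ 3 / 3 ≠ 0 := sub_ne_zero.mpr h
  have memx : {y : ℝ | y ≠ t ^ 3 / 3} ∈ nhds x := (openx t).mem_nhds h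
  have memt : {s : ℝ | x ≠ s ^ 3 / 3} ∈ nhds t := (opent x).mem_nhds h
  have ev1 : (fun y => px u y t) =ᶠ[nhds x] (fun y => F1 y t) := by
    filter_upwards [memx] with y hy
    show deriv (fun w => u w t) y = F1 y t
    rw [hu]
    exact (hU_x y t hy).deriv
  have px1 : px u x t = F1 x t := by rw [hu]; exact (hU_x x t h).deriv
  have px2 : px (px u) x t = F2 x t := by
    have h0 : px (px u) x t = deriv (fun y => px u y t) x := rfl
    rw [h0, ev1.deriv_eq]
    exact (hF1_x x t h).deriv
  have ev2 : (fun y => px (px u) y t) =ᶠ[nhds x] (fun y => F2 y t) := by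
    filter_upwards [memx] with y hy
    show deriv (fun z => px u z t) y = F2 y t
    have evy : (fun z => px u z t) =ᶠ[nhds y] (fun z => F1 z t) := by
      filter_upwards [(openx t).mem_nhds hy] with z hz
      show deriv (fun w => u w t) z = F1 z t
      rw [hu]; exact (hU_x z t hz).deriv
    rw [evy.deriv_eq]
    exact (hF1_x y t hy).deriv
  have px3 : px (px (px u)) x t = F3 x t := by
    have h0 : px (px (px u)) x t = deriv (fun y => px (px u) y t) x := rfl
    rw [h0, ev2.deriv_eq]
    exact (hF2_x x t h).deriv
  have ev3 : (fun y => px (px (px u)) y t) =ᶠ[nhds x] (fun y => F3 y t) := by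
    filter_upwards [memx] with y hy
    show deriv (fun z => px (px u) z t) y = F3 y t
    have evy2 : (fun z => px (px u) z t) =ᶠ[nhds y] (fun z => F2 z t) := by
      filter_upwards [(openx t).mem_nhds hy] with z hz
      show deriv (fun w => px u w t) z = F2 z t
      have evz : (fun w => px u w t) =ᶠ[nhds z] (fun w => F1 w t) := by
        filter_upwards [(openx t).mem_nhds hz] with w hw
        show deriv (fun v => u v t) w = F1 w t
        rw [hu]; exact (hU_x w t hw).deriv
      rw [evz.deriv_eq]
      exact (hF1_x z t hz).deriv
    rw [evy2.deriv_eq]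
    exact (hF2_x y t hy).deriv
  have px4 : px (px (px (px u))) x t = F4 x t := by
    have h0 : px (px (px (px u))) x t = deriv (fun y => px (px (px u)) y t) x := rfl
    rw [h0, ev3.deriv_eq]
    exact (hF3_x x t h).deriv
  have evt : (fun s => pt u x s) =ᶠ[nhds t] (fun s => G1 x s) := by
    filter_upwards [memt] with s hsmem
    show deriv (fun w => u x w) s = G1 x s
    rw [hu]
    exact (hU_t x s hsmem).deriv
  have pt2 : pt (pt u) x t = G2 x t := by
    have h0 : pt (pt u) x t = deriv (fun s => pt u x s) t := rfl
    rw [h0, evt.deriv_eq]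
    exact (hG1_t x t h).deriv
  rw [pt2, px4, px2, px1]
  show G2 x t + F4 x t + U x t * F2 x t + (F1 x t) ^ 2 = 0
  unfold G2 F4 U F2 F1
  set s := x - t ^ 3 / 3 with hsdef
  have hx : x = s + t ^ 3 / 3 := by rw [hsdef]; ring
  rw [hx]
  field_simp [hs]
  ring
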